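/- arXiv:1908.09151 — 2 statements merged into one kernel-verified Lean document; each statement's English description precedes it below -/
import Mathlib

section
/- Let G be a connected graph with a split (A,B,A',B'). Define G_A as the graph on vertex set A∪A'∪{m_A} (m_A a new vertex) whose edges are the edges of G inside A∪A' together with edges from m_A to every vertex of A. Define G_B analogously with new vertex m_B adjacent to all of B. Then both G_A and G_B are connected. -/
/-- A split of a graph `G`: a partition `(A, B, A', B')` of the vertex set such that
every vertex of `A` is adjacent to every vertex of `B`, there are no edges between
`A'` and `B ∪ B'`, no edges between `B'` and `A ∪ A'`, and both sides have size ≥ 2. -/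
structure IsSplit {V : Type*} (G : SimpleGraph V) (A B A' B' : Set V) : Prop where
  cover : A ∪ B ∪ A' ∪ B' = Set.univ
  dAB : Disjoint A B
  dAA' : Disjoint A A'
  dAB' : Disjoint A B'
  dBA' : Disjoint B A'
  dBB' : Disjoint B B'
  dA'B' : Disjoint A' B'
  complete : ∀ a ∈ A, ∀ b ∈ B, G.Adj a b
  noA' : ∀ x ∈ A', ∀ y ∈ B ∪ B', ¬ G.Adj x y
  noB' : ∀ x ∈ B', ∀ y ∈ A ∪ A', ¬ G.Adj x y
  sideA : 2 ≤ (A ∪ A').ncard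
  sideB : 2 ≤ (B ∪ B').ncard

/-- The graph obtained from one side of a split: the induced subgraph on `S`
plus a new marker vertex (`none`) adjacent exactly to the vertices of `M ⊆ S`. -/
def sideGraph {V : Type*} (G : SimpleGraph V) (S M : Set V) : SimpleGraph (Option ↥S) where
  Adj x y :=
    match x, y with
    | some u, some v => G.Adj u v
    | some u, none => (u : V) ∈ M
    | none, some v => (v : V) ∈ M
    | none, none => False
  symm := by
    refine ⟨?_⟩
    rintro (_ | u) (_ | v) h
    · exact h
    · exact h
    · exact h
    · exact h.symm
  loopless := by
    refine ⟨?_⟩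
    rintro (_ | u) h
    · exact h
    · exact G.irrefl h

lemma sideGraph_connected_aux {V : Type*} (G : SimpleGraph V) (A B A' B' : Set V)
    (h : IsSplit G A B A' B') (hconn : G.Connected) :
    (sideGraph G (A ∪ A') A).Connected := by
  have hBne : (B ∪ B').Nonempty := by
    rcases (B ∪ B').eq_empty_or_nonempty with he | hn
    · have := h.sideB
      rw [he, Set.ncard_empty] at this
      omega
    · exact hn
  obtain ⟨b, hb⟩ := hBne
  have key : ∀ u (hu : u ∈ A ∪ A'),
      (sideGraph G (A ∪ A') A).Reachable (some ⟨u, hu⟩) none := by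
    suffices key : ∀ u (w : G.Walk u b) (hu : u ∈ A ∪ A'),
        (sideGraph G (A ∪ A') A).Reachable (some ⟨u, hu⟩) none by
      intro u hu
      obtain ⟨w⟩ := hconn u b
      exact key u w hu
    intro u w
    induction w with
    | nil =>
      rename_i hb
      intro hu
      exfalso
      rcases hu with hu | hu
      · rcases hb with hb | hb
        · exact h.dAB.ne_of_mem hu hb rfl
        · exact h.dAB'.ne_of_mem hu hb rfl
      · rcases hb with hb | hb
        · exact h.dBA'.ne_of_mem hb hu rfl
        · exact h.dA'B'.ne_of_mem hu hb rfl
    | @cons u v _ hadj p ih =>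
      rename_i hb
      intro hu
      rcases hu with huA | huA'
      · exact SimpleGraph.Adj.reachable huA
      · have hv : v ∈ A ∪ A' := by
          by_contra hv
          have : v ∈ B ∪ B' := by
            have := h.cover
            have hvuniv : v ∈ (Set.univ : Set V) := Set.mem_univ v
            rw [← this] at hvuniv
            rcases hvuniv with ((hA | hB) | hA') | hB'
            · exact absurd (Or.inl hA) hv
            · exact Or.inl hB
            · exact absurd (Or.inr hA') hv
            · exact Or.inr hB'
          exact h.noA' u huA' v this hadj
        have e1 : (sideGraph G (A ∪ A') A).Adj (some ⟨u, Or.inr huA'⟩) (some ⟨v, hv⟩) := hadj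
        exact e1.reachable.trans (ih hb hv)
  rw [SimpleGraph.connected_iff]
  refine ⟨?_, ⟨none⟩⟩
  rintro (_ | ⟨u, hu⟩) (_ | ⟨v, hv⟩)
  · rfl
  · exact (key v hv).symm
  · exact key u hu
  · exact (key u hu).trans (key v hv).symm

theorem stmt_1 {V : Type*} (G : SimpleGraph V) (A B A' B' : Set V)
    (h : IsSplit G A B A' B') (hconn : G.Connected) :
    (sideGraph G (A ∪ A') A).Connected ∧ (sideGraph G (B ∪ B') B).Connected := by
  have hswap : IsSplit G B A B' A' :=
    { cover := by rw [← h.cover]; ext x; simp; tauto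
      dAB := h.dAB.symm
      dAA' := h.dBB'
      dAB' := h.dBA'
      dBA' := h.dAB'
      dBB' := h.dAA'
      dA'B' := h.dA'B'.symm
      complete := fun b hb a ha => (h.complete a ha b hb).symm
      noA' := h.noB'
      noB' := h.noA'
      sideA := h.sideB
      sideB := h.sideA }
  exact ⟨sideGraph_connected_aux G A B A' B' h hconn,
    sideGraph_connected_aux G B A B' A' hswap hconn⟩
end

section
/- Let G and H be graphs with splits (A,B,A',B') and (C,D,C',D') respectively, producing graphs G_A, G_B (markers m_A, m_B) and H_C, H_D (markers m_C, m_D). If there are isomorphisms φ : G_A → H_C with φ(m_A) = m_C and ψ : G_B → H_D with ψ(m_B) = m_D, then G and H are isomorphic. -/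
private lemma some_apply_of_none {α β : Type*} (e : Option α ≃ Option β)
    (h : e none = none) (x : α) : e (some x) = some (e.removeNone x) := by
  refine (Equiv.removeNone_some e ?_).symm
  cases he : e (some x) with
  | none =>
      exact absurd (e.injective (he.trans h.symm)) (by simp)
  | some b => exact ⟨b, rfl⟩

private lemma split_adj_iff {V : Type*} {G : SimpleGraph V} {A B A' B' : Set V}
    (hG : IsSplit G A B A' B') {v w : V} (hv : v ∈ A ∪ A') (hw : w ∈ B ∪ B') :
    G.Adj v w ↔ v ∈ A ∧ w ∈ B := by
  constructor
  · intro h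
    rcases hv with hv | hv
    · rcases hw with hw | hw
      · exact ⟨hv, hw⟩
      · exact (hG.noB' w hw v (Or.inl hv) h.symm).elim
    · exact (hG.noA' v hv w hw h).elim
  · rintro ⟨h1, h2⟩
    exact hG.complete v h1 w h2

private lemma split_compl {V : Type*} {G : SimpleGraph V} {A B A' B' : Set V}
    (hG : IsSplit G A B A' B') {v : V} (hv : v ∉ A ∪ A') : v ∈ B ∪ B' := by
  have : v ∈ A ∪ B ∪ A' ∪ B' := hG.cover ▸ Set.mem_univ v
  rcases this with ((h | h) | h) | h
  · exact absurd (Or.inl h) hv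
  · exact Or.inl h
  · exact absurd (Or.inr h) hv
  · exact Or.inr h

private lemma split_disj {V : Type*} {G : SimpleGraph V} {A B A' B' : Set V}
    (hG : IsSplit G A B A' B') : Disjoint (A ∪ A') (B ∪ B') := by
  rw [Set.disjoint_union_left, Set.disjoint_union_right, Set.disjoint_union_right]
  exact ⟨⟨hG.dAB, hG.dAB'⟩, ⟨(hG.dBA').symm, hG.dA'B'⟩⟩

theorem stmt_10 {V W : Type*} (G : SimpleGraph V) (H : SimpleGraph W)
    (A B A' B' : Set V) (C D C' D' : Set W)
    (hG : IsSplit G A B A' B') (hH : IsSplit H C D C' D')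
    (phi : sideGraph G (A ∪ A') A ≃g sideGraph H (C ∪ C') C)
    (psi : sideGraph G (B ∪ B') B ≃g sideGraph H (D ∪ D') D)
    (hphi : phi none = none) (hpsi : psi none = none) :
    Nonempty (G ≃g H) := by
  classical
  set e1 : ↥(A ∪ A') ≃ ↥(C ∪ C') := phi.toEquiv.removeNone with he1
  set e2 : ↥(B ∪ B') ≃ ↥(D ∪ D') := psi.toEquiv.removeNone with he2
  have hphi' : ∀ x : ↥(A ∪ A'), phi (some x) = some (e1 x) :=
    fun x => some_apply_of_none phi.toEquiv hphi x
  have hpsi' : ∀ x : ↥(B ∪ B'), psi (some x) = some (e2 x) :=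
    fun x => some_apply_of_none psi.toEquiv hpsi x
  -- adjacency transfer on each side
  have adj1 : ∀ x y : ↥(A ∪ A'), G.Adj x y ↔ H.Adj (e1 x) (e1 y) := by
    intro x y
    have h := phi.map_rel_iff (a := some x) (b := some y)
    rw [hphi' x, hphi' y] at h
    exact h.symm
  have adj2 : ∀ x y : ↥(B ∪ B'), G.Adj x y ↔ H.Adj (e2 x) (e2 y) := by
    intro x y
    have h := psi.map_rel_iff (a := some x) (b := some y)
    rw [hpsi' x, hpsi' y] at h
    exact h.symm
  -- membership transfer
  have mem1 : ∀ x : ↥(A ∪ A'), (x : V) ∈ A ↔ ((e1 x : W) ∈ C) := by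
    intro x
    have h := phi.map_rel_iff (a := some x) (b := none)
    rw [hphi' x, hphi] at h
    exact h.symm
  have mem2 : ∀ x : ↥(B ∪ B'), (x : V) ∈ B ↔ ((e2 x : W) ∈ D) := by
    intro x
    have h := psi.map_rel_iff (a := some x) (b := none)
    rw [hpsi' x, hpsi] at h
    exact h.symm
  -- the vertex bijection
  refine ⟨{ toEquiv := { toFun := fun v => if h : v ∈ A ∪ A' then (e1 ⟨v, h⟩ : W) else (e2 ⟨v, split_compl hG h⟩ : W), invFun := fun w => if h : w ∈ C ∪ C' then (e1.symm ⟨w, h⟩ : V) else (e2.symm ⟨w, split_compl hH h⟩ : V), left_inv := ?_, right_inv := ?_ }, map_rel_iff' := ?_ }⟩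
  · intro v
    by_cases h : v ∈ A ∪ A'
    · simp only [dif_pos h]
      rw [dif_pos (e1 ⟨v, h⟩).2]
      simp
    · simp only [dif_neg h]
      have hmem := (e2 ⟨v, split_compl hG h⟩).2
      have hnot : (e2 ⟨v, split_compl hG h⟩ : W) ∉ C ∪ C' :=
        fun hc => (split_disj hH).ne_of_mem hc hmem rfl
      rw [dif_neg hnot]
      simp
  · intro w
    by_cases h : w ∈ C ∪ C'
    · simp only [dif_pos h]
      rw [dif_pos (e1.symm ⟨w, h⟩).2]
      simp
    · simp only [dif_neg h]
      have hmem := (e2.symm ⟨w, split_compl hH h⟩).2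
      have hnot : (e2.symm ⟨w, split_compl hH h⟩ : V) ∉ A ∪ A' :=
        fun hc => (split_disj hG).ne_of_mem hc hmem rfl
      rw [dif_neg hnot]
      simp
  · intro v w
    simp only [Equiv.coe_fn_mk]
    by_cases hv : v ∈ A ∪ A' <;> by_cases hw : w ∈ A ∪ A'
    · rw [dif_pos hv, dif_pos hw]
      exact (adj1 ⟨v, hv⟩ ⟨w, hw⟩).symm
    · rw [dif_pos hv, dif_neg hw]
      have hw' := split_compl hG hw
      rw [split_adj_iff hH (e1 ⟨v, hv⟩).2 (e2 ⟨w, hw'⟩).2,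
        ← mem1 ⟨v, hv⟩, ← mem2 ⟨w, hw'⟩]
      exact (split_adj_iff hG hv hw').symm
    · rw [dif_neg hv, dif_pos hw]
      have hv' := split_compl hG hv
      rw [SimpleGraph.adj_comm, SimpleGraph.adj_comm (G := G),
        split_adj_iff hH (e1 ⟨w, hw⟩).2 (e2 ⟨v, hv'⟩).2,
        ← mem1 ⟨w, hw⟩, ← mem2 ⟨v, hv'⟩]
      exact (split_adj_iff hG hw hv').symm
    · rw [dif_neg hv, dif_neg hw]
      exact (adj2 ⟨v, split_compl hG hv⟩ ⟨w, split_compl hG hw⟩).symm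
end
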